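/- Let A be a commutative ring and I ⊆ A an ideal. The canonical map from the symmetric algebra Sym_{A/I}(I/I²) to the associated graded ring ⊕_{n≥0} Iⁿ/Iⁿ⁺¹ is a surjective graded A/I-algebra homomorphism. -/

import Mathlib

set_option linter.unnecessarySimpa false

noncomputable section

/-- The associated graded ring gr_I(A) = ⊕ₙ Iⁿ/Iⁿ⁺¹, realized as the quotient of the
Rees algebra ⊕ₙ Iⁿ by the ideal generated by (the degree-zero copy of) I. -/
abbrev grRing {A : Type*} [CommRing A] (I : Ideal A) : Type _ :=
  (reesAlgebra I) ⧸
    (Ideal.span ((algebraMap A (reesAlgebra I)) '' (I : Set A)))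

/-- The class in `grRing I`, in degree `n`, of an element `a ∈ Iⁿ`. -/
def grDeg {A : Type*} [CommRing A] (I : Ideal A) (n : ℕ) (a : A) (ha : a ∈ I ^ n) :
    grRing I :=
  Ideal.Quotient.mk _ (⟨Polynomial.monomial n a, reesAlgebra.monomial_mem.2 ha⟩ :
    reesAlgebra I)

open Polynomial

set_option maxHeartbeats 1000000
set_option synthInstance.maxHeartbeats 400000

lemma grRing_algebraMap_eq_zero {A : Type*} [CommRing A] (I : Ideal A) {a : A} (ha : a ∈ I) :
    algebraMap A (grRing I) a = 0 := by
  have : algebraMap A (grRing I) a =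
      Ideal.Quotient.mk _ (algebraMap A (reesAlgebra I) a) := rfl
  rw [this]
  exact Ideal.Quotient.eq_zero_iff_mem.mpr (Ideal.subset_span ⟨a, ha, rfl⟩)

lemma grRing_smul_mk {A : Type*} [CommRing A] (I : Ideal A) (c : A) (r : reesAlgebra I) :
    c • (Ideal.Quotient.mk (Ideal.span ((algebraMap A (reesAlgebra I)) '' (I : Set A))) r)
      = Ideal.Quotient.mk _ (c • r) := by
  have h1 : c • (Ideal.Quotient.mk (Ideal.span ((algebraMap A (reesAlgebra I)) '' (I : Set A))) r)
      = algebraMap A (grRing I) c * Ideal.Quotient.mk _ r := Algebra.smul_def (A := grRing I) _ _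
  have h2 : algebraMap A (grRing I) c =
      Ideal.Quotient.mk _ (algebraMap A (reesAlgebra I) c) := rfl
  rw [h1, h2, ← map_mul, ← Algebra.smul_def]

/-- degree-one linear map `I →ₗ[A] grRing I`. -/
def grF {A : Type*} [CommRing A] (I : Ideal A) : I →ₗ[A] grRing I where
  toFun x := grDeg I 1 (x : A) (by simpa using x.2)
  map_add' x y := by
    show Ideal.Quotient.mk _ _ = Ideal.Quotient.mk _ _ + Ideal.Quotient.mk _ _
    rw [← map_add]
    exact congrArg _ (Subtype.ext (by simp))
  map_smul' c x := by
    show Ideal.Quotient.mk _ _ = c • Ideal.Quotient.mk _ _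
    rw [grRing_smul_mk]
    exact congrArg _ (Subtype.ext (by simp [Polynomial.smul_monomial]))

lemma grF_apply {A : Type*} [CommRing A] (I : Ideal A) (x : I) :
    grF I x = grDeg I 1 (x : A) (by simpa using x.2) := rfl

lemma grRing_smul_eq_zero {A : Type*} [CommRing A] (I : Ideal A) {c : A} (hc : c ∈ I)
    (z : grRing I) : c • z = 0 := by
  obtain ⟨r, rfl⟩ := Ideal.Quotient.mk_surjective z
  rw [grRing_smul_mk]
  refine Ideal.Quotient.eq_zero_iff_mem.mpr ?_
  rw [Algebra.smul_def]
  exact Ideal.mul_mem_right _ _ (Ideal.subset_span ⟨c, hc, rfl⟩)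

lemma grF_ker {A : Type*} [CommRing A] (I : Ideal A) :
    (I • (⊤ : Submodule A I)) ≤ LinearMap.ker (grF I) := by
  intro x hx
  refine Submodule.smul_induction_on hx ?_ ?_
  · intro c hc y _
    simp only [LinearMap.mem_ker, map_smul]
    exact grRing_smul_eq_zero I hc _
  · intro x y hx hy
    simp only [LinearMap.mem_ker, map_add] at *
    rw [hx, hy, add_zero]

/-- for an ideal I of a commutative ring A, the associated graded ring
gr_I(A) is an A/I-algebra (I acts as zero), and the canonical map
Sym_{A/I}(I/I²) → gr_I(A) is a surjective graded algebra homomorphism; equivalently,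
there is a linear map λ : I/I² → gr_I(A) sending the class of a ∈ I to the degree-one
class of a, whose image generates gr_I(A) as an algebra. -/
theorem stmt_4 {A : Type*} [CommRing A] (I : Ideal A) :
    (∀ a ∈ I, algebraMap A (grRing I) a = 0) ∧
      ∃ lam : I.Cotangent →ₗ[A] grRing I,
        (∀ x : I, lam (I.toCotangent x) = grDeg I 1 (x : A) (by simpa using x.2)) ∧
        Algebra.adjoin A
            ((LinearMap.range lam : Submodule A (grRing I)) : Set (grRing I)) = ⊤ := by
  refine ⟨fun a ha => grRing_algebraMap_eq_zero I ha, ?_⟩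
  refine ⟨Submodule.liftQ _ (grF I) (grF_ker I), fun x => Submodule.liftQ_apply _ _ _, ?_⟩
  set lam : I.Cotangent →ₗ[A] grRing I := Submodule.liftQ _ (grF I) (grF_ker I) with hlam
  set T := Algebra.adjoin A ((LinearMap.range lam : Submodule A (grRing I)) : Set (grRing I))
    with hT
  -- range of lam contains all degree-one classes
  have hrange : ∀ x : I, grF I x ∈ T := by
    intro x
    refine Algebra.subset_adjoin ?_
    exact ⟨I.toCotangent x, Submodule.liftQ_apply _ _ _⟩
  have key : ∀ p ∈ Algebra.adjoin A
      ((Submodule.map (monomial 1 : A →ₗ[A] A[X]) I : Submodule A A[X]) : Set A[X]),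
      ∃ h : p ∈ reesAlgebra I, Ideal.Quotient.mk _ (⟨p, h⟩ : reesAlgebra I) ∈ T := by
    intro p hp
    refine Algebra.adjoin_induction ?_ ?_ ?_ ?_ hp
    · rintro _ ⟨r, hr, rfl⟩
      refine ⟨reesAlgebra.monomial_mem.mpr (by simpa using hr), ?_⟩
      exact hrange ⟨r, hr⟩
    · intro a
      refine ⟨(reesAlgebra I).algebraMap_mem a, ?_⟩
      have : Ideal.Quotient.mk
          (Ideal.span ((algebraMap A (reesAlgebra I)) '' (I : Set A)))
          (algebraMap A (reesAlgebra I) a) = algebraMap A (grRing I) a := rfl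
      exact this ▸ Subalgebra.algebraMap_mem T a
    · rintro p q _ _ ⟨hp, Hp⟩ ⟨hq, Hq⟩
      refine ⟨add_mem hp hq, ?_⟩
      have : (⟨p + q, add_mem hp hq⟩ : reesAlgebra I) =
          (⟨p, hp⟩ : reesAlgebra I) + ⟨q, hq⟩ := rfl
      rw [this, map_add]
      exact add_mem Hp Hq
    · rintro p q _ _ ⟨hp, Hp⟩ ⟨hq, Hq⟩
      refine ⟨mul_mem hp hq, ?_⟩
      have : (⟨p * q, mul_mem hp hq⟩ : reesAlgebra I) =
          (⟨p, hp⟩ : reesAlgebra I) * ⟨q, hq⟩ := rfl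
      rw [this, map_mul]
      exact mul_mem Hp Hq
  rw [eq_top_iff]
  rintro z -
  obtain ⟨r, rfl⟩ := Ideal.Quotient.mk_surjective z
  obtain ⟨p, hp⟩ := r
  obtain ⟨h, H⟩ := key p (by rw [adjoin_monomial_eq_reesAlgebra]; exact hp)
  exact H
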